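/- Define d^{(k)}_{i,j} for integers i,j ≥ 0 by the recurrence d^{(k+1)}_{i,j} = d^{(k)}_{i,j−1} + q^j d^{(k)}_{i−1,j} + y(1−q^{j+1}) d^{(k)}_{i,j+1}, with d^{(0)}_{i,j} = 1 if (i,j)=(0,0) and 0 otherwise (terms with negative indices are 0). Then d^{(k)}_{i,j} = qbinom(i+j, i) · M_{(k−i−j)/2, k} when k−i−j is even and nonnegative, and d^{(k)}_{i,j} = 0 otherwise, where M_{ℓ,k} = y^ℓ ∑_{u=0}^{ℓ} (−1)^u q^{C(u+1,2)} qbinom(k−2ℓ+u, u) (C(k, ℓ−u) − C(k, ℓ−u−1)). -/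

import Mathlib

/-- Binomial coefficient with integer lower index, zero when the lower index is negative. -/
def intChoose (a : ℕ) (b : ℤ) : ℕ := if 0 ≤ b then a.choose b.toNat else 0

/-- The Gaussian q-binomial coefficient at `q`, via the q-Pascal recurrence. -/
def qbin {R : Type*} [CommRing R] (q : R) : ℕ → ℕ → R
  | _, 0 => 1
  | 0, _ + 1 => 0
  | n + 1, k + 1 => qbin q n k + q ^ (k + 1) * qbin q n (k + 1)

/-- The polynomial ring `ℚ[q,y]`. -/
abbrev QY : Type := MvPolynomial (Fin 2) ℚ

/-- The variable `q`. -/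
noncomputable def qv : QY := MvPolynomial.X 0
/-- The variable `y`. -/
noncomputable def yv : QY := MvPolynomial.X 1

/-- `M_{ℓ,k} = y^ℓ ∑_{u=0}^{ℓ} (−1)^u q^{C(u+1,2)} qbinom(k−2ℓ+u,u) (C(k,ℓ−u) − C(k,ℓ−u−1))`. -/
noncomputable def Mlk (ℓ k : ℕ) : QY :=
  yv ^ ℓ * ∑ u ∈ Finset.range (ℓ + 1),
    (-1 : QY) ^ u * qv ^ ((u + 1).choose 2) * qbin qv (k - 2 * ℓ + u) u *
      ((k.choose (ℓ - u) : QY) - (intChoose k ((ℓ : ℤ) - u - 1) : QY))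

/-- The normal-form coefficients `d^{(k)}_{i,j}`, defined by
`d^{(k+1)}_{i,j} = d^{(k)}_{i,j−1} + q^j d^{(k)}_{i−1,j} + y(1−q^{j+1}) d^{(k)}_{i,j+1}`
with terms with negative indices equal to `0`, and `d^{(0)}_{i,j} = δ_{(i,j),(0,0)}`. -/
noncomputable def dCoeff : ℕ → ℕ → ℕ → QY
  | 0, i, j => if i = 0 ∧ j = 0 then 1 else 0
  | k + 1, i, j =>
      (if j = 0 then 0 else dCoeff k i (j - 1)) +
      (if i = 0 then 0 else qv ^ j * dCoeff k (i - 1) j) +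
      yv * (1 - qv ^ (j + 1)) * dCoeff k i (j + 1)

section Aux

variable {R : Type*} [CommRing R] (q : R)

lemma qbin_zero_right (n : ℕ) : qbin q n 0 = 1 := by cases n <;> rfl

lemma qbin_eq_zero : ∀ n k : ℕ, n < k → qbin q n k = 0 := by
  intro n
  induction n with
  | zero => intro k hk; cases k with
    | zero => omega
    | succ k => rfl
  | succ n ih =>
    intro k hk
    cases k with
    | zero => omega
    | succ k =>
      rw [qbin, ih k (by omega), ih (k+1) (by omega)]
      ring

lemma qbin_self : ∀ n : ℕ, qbin q n n = 1 := by
  intro n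
  induction n with
  | zero => rfl
  | succ n ih => rw [qbin, ih, qbin_eq_zero q n (n+1) (by omega)]; ring

lemma qbin_B : ∀ n k d : ℕ, n = k + d →
    (1 - q^d) * qbin q n k = (1 - q^(k+1)) * qbin q n (k+1) := by
  intro n
  induction n with
  | zero =>
    intro k d h
    obtain ⟨rfl, rfl⟩ : k = 0 ∧ d = 0 := by omega
    rw [qbin_zero_right, qbin_eq_zero q 0 1 (by omega)]
    ring
  | succ n ih =>
    intro k d h
    cases k with
    | zero =>
      obtain rfl : d = n + 1 := by omega
      have h1 := ih 0 n (by omega)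
      rw [qbin_zero_right] at h1 ⊢
      rw [show qbin q (n+1) 1 = qbin q n 0 + q^1 * qbin q n 1 from rfl, qbin_zero_right]
      linear_combination q * h1
    | succ k =>
      cases d with
      | zero =>
        obtain rfl : n = k := by omega
        rw [qbin_eq_zero q (n+1) (n+2) (by omega), pow_zero]
        ring
      | succ d =>
        have hn : n = k + d + 1 := by omega
        have ih1 := ih k (d+1) (by omega)
        have ih2 := ih (k+1) d (by omega)
        rw [show qbin q (n+1) (k+1) = qbin q n k + q^(k+1) * qbin q n (k+1) from rfl,
          show qbin q (n+1) (k+2) = qbin q n (k+1) + q^(k+2) * qbin q n (k+2) from rfl]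
        linear_combination ih1 + q^(k+2) * ih2

lemma qbin_A : ∀ m d : ℕ, (1 - q^(d+1)) * qbin q (m+d+1) m = (1 - q^(m+d+1)) * qbin q (m+d) m := by
  intro m d
  cases m with
  | zero =>
    rw [qbin_zero_right, qbin_zero_right, show (0:ℕ)+d+1 = d+1 from by omega]
  | succ m =>
    have hd : qbin q (m+1+d+1) (m+1) = qbin q (m+d+1) m + q^(m+1) * qbin q (m+d+1) (m+1) := by
      rw [show m+1+d+1 = (m+d+1)+1 from by omega]; rfl
    have hB := qbin_B q (m+d+1) m (d+1) (by omega)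
    rw [hd, show m+1+d = m+d+1 from by omega]
    linear_combination hB

lemma qbin_succ (n u : ℕ) : qbin q (n+2+u) (u+1) = qbin q (n+1+u) (u+1) + q^(n+1) * qbin q (n+1+u) u := by
  have hd : qbin q (n+2+u) (u+1) = qbin q (n+1+u) u + q^(u+1) * qbin q (n+1+u) (u+1) := by
    rw [show n+2+u = (n+1+u)+1 from by omega]; rfl
  have hB := qbin_B q (n+1+u) u (n+1) (by omega)
  rw [hd]; linear_combination hB

noncomputable def fco (u : ℕ) : QY := (-1 : QY)^u * qv^((u+1).choose 2)
noncomputable def Aco (k l u : ℕ) : QY :=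
  (k.choose (l-u) : QY) - (intChoose k ((l:ℤ) - u - 1) : QY)

lemma Mlk_eq (l k : ℕ) : Mlk l k
    = yv^l * ∑ u ∈ Finset.range (l+1), fco u * qbin qv (k - 2*l + u) u * Aco k l u := rfl

lemma fco_zero : fco 0 = 1 := by simp [fco]
lemma fco_succ (u : ℕ) : fco (u+1) = -(qv^(u+1)) * fco u := by
  unfold fco
  rw [show u+1+1 = (u+1)+1 from rfl, Nat.choose_succ_succ (u+1) 1, Nat.choose_one_right,
    pow_add, pow_succ]
  ring

lemma intChoose_ofNat (a s : ℕ) : intChoose a (s : ℤ) = a.choose s := by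
  simp [intChoose]

lemma intChoose_neg (a : ℕ) {b : ℤ} (h : b < 0) : intChoose a b = 0 := by
  rw [intChoose, if_neg (by omega)]

lemma Aco_last (k l : ℕ) : Aco k l l = 1 := by
  rw [Aco, Nat.sub_self, intChoose_neg _ (by omega : (l:ℤ)-l-1 < 0)]
  simp

lemma Aco_shift (k l u : ℕ) (h : u < l) : Aco k l (u+1) = Aco k (l-1) u := by
  rw [Aco, Aco, show l-(u+1) = (l-1)-u from by omega,
    show (l:ℤ)-(u+1:ℕ)-1 = ((l-1:ℕ):ℤ)-u-1 from by omega]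

lemma Aco_pascal (k l u : ℕ) (h : u < l) : Aco (k+1) l u = Aco k l u + Aco k (l-1) u := by
  have hs1 : l - u = (l-1-u)+1 := by omega
  have hs2 : (l:ℤ)-u-1 = ((l-1-u : ℕ):ℤ) := by omega
  have hs3 : (l-1) - u = l-1-u := rfl
  have hs4 : ((l-1:ℕ):ℤ)-u-1 = ((l-1-u:ℕ):ℤ) - 1 := by omega
  rw [Aco, Aco, Aco, hs1, hs2, hs4, intChoose_ofNat, intChoose_ofNat]
  cases h' : l-1-u with
  | zero =>
    rw [intChoose_neg _ (by omega : ((0:ℕ):ℤ) - 1 < 0)]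
    simp [Nat.choose_succ_succ]
  | succ s =>
    rw [show ((s+1:ℕ):ℤ) - 1 = ((s:ℕ):ℤ) from by omega, intChoose_ofNat]
    push_cast [Nat.choose_succ_succ]
    ring

lemma Mlk_zero (k : ℕ) : Mlk 0 k = 1 := by
  rw [Mlk_eq, Finset.sum_range_one, fco_zero, qbin_zero_right]
  simp [Aco, intChoose]


lemma key_sum (k l n : ℕ) (hk : k = 2*l + n) (hl : 1 ≤ l) :
    ∑ u ∈ Finset.range (l+1), fco u * qbin qv (n+1+u) u * Aco (k+1) l u
    = ∑ u ∈ Finset.range (l+1), fco u * qbin qv (n+u) u * Aco k l u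
      + (1 - qv^(n+2)) * ∑ u ∈ Finset.range l, fco u * qbin qv (n+2+u) u * Aco k (l-1) u := by
  have e : ∀ u ∈ Finset.range l, fco u * qbin qv (n+1+u) u * Aco (k+1) l u
      = fco u * qbin qv (n+1+u) u * Aco k l u + fco u * qbin qv (n+1+u) u * Aco k (l-1) u := by
    intro u hu
    rw [Aco_pascal k l u (Finset.mem_range.mp hu)]
    ring
  rw [Finset.sum_range_succ, Aco_last (k+1) l, Finset.sum_congr rfl e, Finset.sum_add_distrib]
  have step2 : ∑ u ∈ Finset.range (l+1), fco u * qbin qv (n+1+u) u * Aco k l u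
      = ∑ u ∈ Finset.range (l+1), fco u * qbin qv (n+u) u * Aco k l u
        + ∑ u ∈ Finset.range l, (-(qv^(n+2+u)) * (fco u * qbin qv (n+1+u) u * Aco k (l-1) u)) := by
    rw [Finset.sum_range_succ' (fun u => fco u * qbin qv (n+1+u) u * Aco k l u) l,
      Finset.sum_range_succ' (fun u => fco u * qbin qv (n+u) u * Aco k l u) l]
    have e2 : ∀ u ∈ Finset.range l,
        fco (u+1) * qbin qv (n+1+(u+1)) (u+1) * Aco k l (u+1)
        = fco (u+1) * qbin qv (n+(u+1)) (u+1) * Aco k l (u+1)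
          + (-(qv^(n+2+u)) * (fco u * qbin qv (n+1+u) u * Aco k (l-1) u)) := by
      intro u hu
      have hu' := Finset.mem_range.mp hu
      rw [show n+1+(u+1) = n+2+u from by omega, show n+(u+1) = n+1+u from by omega,
        qbin_succ qv n u, fco_succ, Aco_shift k l u hu']
      ring
    rw [Finset.sum_congr rfl e2, Finset.sum_add_distrib]
    rw [qbin_zero_right, qbin_zero_right]
    ring
  rw [Finset.sum_range_succ, Aco_last k l] at step2
  have step3 : ∑ u ∈ Finset.range l, fco u * qbin qv (n+1+u) u * Aco k (l-1) u
      + ∑ u ∈ Finset.range l, (-(qv^(n+2+u)) * (fco u * qbin qv (n+1+u) u * Aco k (l-1) u))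
      = (1 - qv^(n+2)) * ∑ u ∈ Finset.range l, fco u * qbin qv (n+2+u) u * Aco k (l-1) u := by
    rw [← Finset.sum_add_distrib, Finset.mul_sum]
    refine Finset.sum_congr rfl ?_
    intro u hu
    have hA := qbin_A qv u (n+1)
    rw [show u+(n+1)+1 = n+2+u from by omega, show u+(n+1) = n+1+u from by omega] at hA
    linear_combination (-(fco u * Aco k (l-1) u)) * hA
  linear_combination step2 + step3

lemma Mkey (L n : ℕ) :
    Mlk (L+1) (2*L+n+3) = Mlk (L+1) (2*L+n+2) + yv * (1 - qv^(n+2)) * Mlk L (2*L+n+2) := by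
  rw [Mlk_eq, Mlk_eq, Mlk_eq]
  have e1 : ∀ u, 2*L+n+3 - 2*(L+1) + u = n+1+u := fun u => by omega
  have e2 : ∀ u, 2*L+n+2 - 2*(L+1) + u = n+u := fun u => by omega
  have e3 : ∀ u, 2*L+n+2 - 2*L + u = n+2+u := fun u => by omega
  simp only [e1, e2, e3]
  have hkey := key_sum (2*L+n+2) (L+1) n (by omega) (by omega)
  rw [Nat.add_sub_cancel, show 2*L+n+2+1 = 2*L+n+3 from by omega] at hkey
  rw [hkey]
  ring

lemma choose_symm_mid (m : ℕ) : (2*m+1).choose (m+1) = (2*m+1).choose m := by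
  rw [← Nat.choose_symm (show m ≤ 2*m+1 by omega), show 2*m+1-m = m+1 from by omega]

lemma Mbound (m : ℕ) : Mlk (m+1) (2*m+2) = yv * (1 - qv) * Mlk m (2*m+1) := by
  rw [Mlk_eq, Mlk_eq]
  have e1 : ∀ u, 2*m+2 - 2*(m+1) + u = u := fun u => by omega
  have e2 : ∀ u, 2*m+1 - 2*m + u = 1+u := fun u => by omega
  simp only [e1, e2, qbin_self]
  have epas : ∀ u ∈ Finset.range (m+1), fco u * 1 * Aco (2*m+2) (m+1) u
      = fco u * 1 * Aco (2*m+1) (m+1) u + fco u * 1 * Aco (2*m+1) m u := by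
    intro u hu
    have hp := Aco_pascal (2*m+1) (m+1) u (Finset.mem_range.mp hu)
    rw [Nat.add_sub_cancel] at hp
    rw [show 2*m+2 = 2*m+1+1 from by omega, hp]; ring
  rw [Finset.sum_range_succ, Aco_last (2*m+2) (m+1), Finset.sum_congr rfl epas,
    Finset.sum_add_distrib]
  have stepT : ∑ u ∈ Finset.range (m+1), fco u * 1 * Aco (2*m+1) (m+1) u + fco (m+1) * 1 * 1
      = ∑ u ∈ Finset.range (m+1), (-(qv^(u+1)) * (fco u * 1 * Aco (2*m+1) m u)) := by
    rw [show fco (m+1) * 1 * 1 = fco (m+1) * 1 * Aco (2*m+1) (m+1) (m+1) from by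
        rw [Aco_last],
      ← Finset.sum_range_succ, Finset.sum_range_succ']
    have h0 : Aco (2*m+1) (m+1) 0 = 0 := by
      rw [Aco, intChoose, if_pos (by omega : (0:ℤ) ≤ ((m+1:ℕ):ℤ) - (0:ℕ) - 1),
        show ((((m+1:ℕ):ℤ) - ((0:ℕ):ℤ) - 1)).toNat = m from by omega,
        Nat.sub_zero, choose_symm_mid]
      ring
    have eshift : ∀ u ∈ Finset.range (m+1),
        fco (u+1) * 1 * Aco (2*m+1) (m+1) (u+1) = -(qv^(u+1)) * (fco u * 1 * Aco (2*m+1) m u) := by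
      intro u hu
      have hs := Aco_shift (2*m+1) (m+1) u (by have := Finset.mem_range.mp hu; omega)
      rw [Nat.add_sub_cancel] at hs
      rw [hs, fco_succ]; ring
    rw [h0, Finset.sum_congr rfl eshift]
    ring
  have step3 : ∑ u ∈ Finset.range (m+1), fco u * 1 * Aco (2*m+1) m u
      + ∑ u ∈ Finset.range (m+1), (-(qv^(u+1)) * (fco u * 1 * Aco (2*m+1) m u))
      = (1-qv) * ∑ u ∈ Finset.range (m+1), fco u * qbin qv (1+u) u * Aco (2*m+1) m u := by
    rw [Finset.mul_sum, ← Finset.sum_add_distrib]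
    refine Finset.sum_congr rfl fun u hu => ?_
    have hA := qbin_A qv u 0
    rw [show u+0+1 = 1+u from by omega, show u+0 = u from rfl, qbin_self] at hA
    linear_combination (-(fco u * Aco (2*m+1) m u)) * hA
  linear_combination yv^(m+1) * stepT + yv^(m+1) * step3

end Aux

theorem stmt16 (k i j : ℕ) :
    dCoeff k i j =
      if i + j ≤ k ∧ (k - i - j) % 2 = 0 then
        qbin qv (i + j) i * Mlk ((k - i - j) / 2) k
      else 0 := by
  induction k generalizing i j with
  | zero =>
    rw [show dCoeff 0 i j = if i = 0 ∧ j = 0 then 1 else 0 from rfl]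
    by_cases h : i = 0 ∧ j = 0
    · obtain ⟨rfl, rfl⟩ := h
      rw [if_pos ⟨rfl, rfl⟩, if_pos (by omega : (0:ℕ) + 0 ≤ 0 ∧ (0 - 0 - 0) % 2 = 0)]
      rw [show (0 - 0 - 0 : ℕ)/2 = 0 from rfl, Mlk_zero, qbin_zero_right]
      ring
    · rw [if_neg h, if_neg (by omega)]
  | succ k ih =>
    rw [show dCoeff (k+1) i j
        = (if j = 0 then 0 else dCoeff k i (j - 1)) +
          (if i = 0 then 0 else qv ^ j * dCoeff k (i - 1) j) +
          yv * (1 - qv ^ (j + 1)) * dCoeff k i (j + 1) from rfl,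
      ih i (j-1), ih (i-1) j, ih i (j+1)]
    by_cases hmain : i + j ≤ k + 1 ∧ (k + 1 - i - j) % 2 = 0
    · rw [if_pos hmain]
      obtain ⟨hle, hpar⟩ := hmain
      by_cases hij : i + j = k + 1
      · -- boundary case ℓ = 0
        rw [show (k+1-i-j)/2 = 0 from by omega, Mlk_zero]
        cases i with
        | zero =>
          cases j with
          | zero => omega
          | succ j' =>
            split_ifs <;> try omega
            all_goals try (exfalso; assumption)
            rw [show (k - 0 - (j'+1-1))/2 = 0 from by omega, Mlk_zero,
              qbin_zero_right, qbin_zero_right]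
            ring
        | succ i' =>
          cases j with
          | zero =>
            split_ifs <;> try omega
            all_goals try (exfalso; assumption)
            rw [show (k - (i'+1-1) - 0)/2 = 0 from by omega, Mlk_zero,
              show i'+1-1+0 = i' from by omega, show i'+1-1 = i' from by omega,
              show i'+1+0 = i'+1 from by omega, qbin_self, qbin_self]
            ring
          | succ j' =>
            obtain rfl : k = i' + (j'+1) := by omega
            split_ifs <;> try omega
            all_goals try (exfalso; assumption)
            rw [show (i'+(j'+1) - (i'+1) - (j'+1-1))/2 = 0 from by omega, Mlk_zero,
              show (i'+(j'+1) - (i'+1-1) - (j'+1))/2 = 0 from by omega, Mlk_zero,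
              show i'+1-1 = i' from by omega,
              show i'+1+(j'+1-1) = i'+(j'+1) from by omega,
              show i'+1+(j'+1) = (i'+(j'+1))+1 from by omega,
              show qbin qv ((i'+(j'+1))+1) (i'+1)
                = qbin qv (i'+(j'+1)) i' + qv^(i'+1) * qbin qv (i'+(j'+1)) (i'+1) from rfl]
            linear_combination (-1 : QY) * qbin_B qv (i'+(j'+1)) i' (j'+1) rfl
      · -- interior case, ℓ ≥ 1
        obtain ⟨L, hL⟩ : ∃ L, k+1-i-j = 2*(L+1) := ⟨(k+1-i-j)/2 - 1, by omega⟩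
        rw [show (k+1-i-j)/2 = L+1 from by omega]
        cases i with
        | zero =>
          cases j with
          | zero =>
            obtain rfl : k = 2*L+1 := by omega
            split_ifs <;> try omega
            all_goals try (exfalso; assumption)
            rw [show (2*L+1 - 0 - (0+1))/2 = L from by omega,
              show 2*L+1+1 = 2*L+2 from by omega, Mbound L, qbin_zero_right, qbin_zero_right]
            ring
          | succ j' =>
            obtain rfl : k = 2*L+j'+2 := by omega
            split_ifs <;> try omega
            all_goals try (exfalso; assumption)
            rw [show (2*L+j'+2 - 0 - (j'+1-1))/2 = L+1 from by omega,
              show (2*L+j'+2 - 0 - (j'+1+1))/2 = L from by omega,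
              show 2*L+j'+2+1 = 2*L+j'+3 from by omega, Mkey L j',
              qbin_zero_right, qbin_zero_right, qbin_zero_right]
            ring
        | succ i' =>
          cases j with
          | zero =>
            obtain rfl : k = 2*L+i'+2 := by omega
            split_ifs <;> try omega
            all_goals try (exfalso; assumption)
            have hA := qbin_A qv (i'+1) 0
            rw [show i'+1+0+1 = i'+1+(0+1) from by omega,
              show i'+1+0 = i'+1 from by omega, qbin_self] at hA
            rw [show (2*L+i'+2 - (i'+1-1) - 0)/2 = L+1 from by omega,
              show (2*L+i'+2 - (i'+1) - (0+1))/2 = L from by omega,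
              show i'+1-1+0 = i' from by omega, show i'+1-1 = i' from by omega,
              show i'+1+0 = i'+1 from by omega,
              qbin_self, qbin_self,
              show 2*L+i'+2+1 = 2*L+i'+3 from by omega, Mkey L i']
            linear_combination yv * Mlk L (2*L+i'+2) * hA
          | succ j' =>
            obtain rfl : k = 2*L+(i'+(j'+1))+2 := by omega
            split_ifs <;> try omega
            all_goals try (exfalso; assumption)
            have hA := qbin_A qv (i'+1) (j'+1)
            rw [show i'+1+(j'+1)+1 = i'+1+(j'+1+1) from by omega,
              show i'+1+(j'+1) = i'+(j'+1)+1 from by omega] at hA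
            have hP : qbin qv ((i'+(j'+1))+1) (i'+1)
                = qbin qv (i'+(j'+1)) i' + qv^(i'+1) * qbin qv (i'+(j'+1)) (i'+1) := rfl
            have hB := qbin_B qv (i'+(j'+1)) i' (j'+1) rfl
            rw [show (2*L+(i'+(j'+1))+2 - (i'+1) - (j'+1-1))/2 = L+1 from by omega,
              show (2*L+(i'+(j'+1))+2 - (i'+1-1) - (j'+1))/2 = L+1 from by omega,
              show (2*L+(i'+(j'+1))+2 - (i'+1) - (j'+1+1))/2 = L from by omega,
              show i'+1-1 = i' from by omega,
              show i'+1+(j'+1-1) = i'+(j'+1) from by omega,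
              show i'+1+(j'+1) = (i'+(j'+1))+1 from by omega,
              show 2*L+(i'+(j'+1))+2+1 = 2*L+(i'+(j'+1))+3 from by omega,
              Mkey L (i'+(j'+1))]
            linear_combination yv * Mlk L (2*L+(i'+(j'+1))+2) * hA
              - Mlk (L+1) (2*L+(i'+(j'+1))+2) * hP
              - Mlk (L+1) (2*L+(i'+(j'+1))+2) * hB
    · rw [if_neg hmain]
      split_ifs <;> first | omega | ring
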